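/- Soundness of the trace-based Hoare logic: for any While statement s, state predicate U and setoid trace predicate P, if ⊢{U} s {P} is derivable, then for all states σ and traces τ, if U σ and (s,σ) ⇒ τ, then τ satisfies P. -/

import Mathlib

namespace WhileTrace

/-- Program variables. -/
abbrev Var := ℕ
/-- States assign integer values to variables. -/
abbrev State := Var → ℤ
/-- Arithmetic expressions, modelled by their integer value in each state. -/
abbrev Expr := State → ℤ

/-- State update `σ[x ↦ v]`. -/
def update (σ : State) (x : Var) (v : ℤ) : State := Function.update σ x v

/-- Reading an expression as a boolean: `σ ⊨ e`. -/
def istrue (e : Expr) (σ : State) : Prop := e σ ≠ 0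

/-- Traces: nonempty, possibly infinite sequences of states
(a head state together with a possibly infinite sequence of further states). -/
def Trace : Type := State × Stream'.Seq State

/-- The singleton trace `⟨σ⟩`. -/
def Trace.single (σ : State) : Trace := (σ, Stream'.Seq.nil)

/-- The cons trace `σ :: τ`. -/
def Trace.cons (σ : State) (τ : Trace) : Trace := (σ, Stream'.Seq.cons τ.1 τ.2)

/-- The first state of a trace. -/
def Trace.hd (τ : Trace) : State := τ.1

/-- Bisimilarity of traces `τ ≈ τ'`, as a greatest fixed point:
there is a relation `R` relating the two traces that is consistent with the
coinductive rules `⟨σ⟩ ≈ ⟨σ⟩` and `σ::τ ≈ σ::τ'` whenever `τ ≈ τ'`. -/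
def Bisim (τ τ' : Trace) : Prop :=
  ∃ R : Trace → Trace → Prop, R τ τ' ∧
    ∀ a b, R a b →
      (∃ σ, a = Trace.single σ ∧ b = Trace.single σ) ∨
      (∃ σ a' b', a = Trace.cons σ a' ∧ b = Trace.cons σ b' ∧ R a' b')

/-- Finiteness `τ ↓ σ` : `τ` is finite with last state `σ` (inductive). -/
inductive Converges : Trace → State → Prop
  | single (σ : State) : Converges (Trace.single σ) σ
  | cons (σ' : State) {τ : Trace} {σ : State} :
      Converges τ σ → Converges (Trace.cons σ' τ) σ

/-- Infiniteness of a trace (coinductive, as a greatest fixed point). -/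
def InfiniteT (τ : Trace) : Prop :=
  ∃ P : Trace → Prop, P τ ∧ ∀ a, P a → ∃ σ a', a = Trace.cons σ a' ∧ P a'

/-- Statements of the While language. -/
inductive Stmt : Type
  | assign (x : Var) (e : Expr)
  | skip
  | seq (s₀ s₁ : Stmt)
  | ifte (e : Expr) (st sf : Stmt)
  | whileDo (e : Expr) (st : Stmt)

/-- A pair of relations `(E, ES)` is consistent with the rules of evaluation
and extended evaluation: every claimed evaluation is backed by one of the
coinductive rules, with premises again in `(E, ES)`. -/
def EvalConsistent (E : Stmt → State → Trace → Prop)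
    (ES : Stmt → Trace → Trace → Prop) : Prop :=
  (∀ x e σ τ, E (.assign x e) σ τ →
      τ = Trace.cons σ (Trace.single (update σ x (e σ)))) ∧
  (∀ σ τ, E .skip σ τ → τ = Trace.single σ) ∧
  (∀ s₀ s₁ σ τ', E (.seq s₀ s₁) σ τ' → ∃ τ, E s₀ σ τ ∧ ES s₁ τ τ') ∧
  (∀ e st sf σ τ, E (.ifte e st sf) σ τ →
      (istrue e σ ∧ ES st (Trace.cons σ (Trace.single σ)) τ) ∨
      (¬ istrue e σ ∧ ES sf (Trace.cons σ (Trace.single σ)) τ)) ∧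
  (∀ e st σ τ', E (.whileDo e st) σ τ' →
      (istrue e σ ∧ ∃ τ, ES st (Trace.cons σ (Trace.single σ)) τ ∧
        ES (.whileDo e st) τ τ') ∨
      (¬ istrue e σ ∧ τ' = Trace.cons σ (Trace.single σ))) ∧
  (∀ s τ τ', ES s τ τ' →
      (∃ σ, τ = Trace.single σ ∧ E s σ τ') ∨
      (∃ σ τ₀ τ₀', τ = Trace.cons σ τ₀ ∧ τ' = Trace.cons σ τ₀' ∧ ES s τ₀ τ₀'))

/-- Evaluation `(s,σ) ⇒ τ` : greatest fixed point of the mutual coinductive rules. -/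
def Exec (s : Stmt) (σ : State) (τ : Trace) : Prop :=
  ∃ E ES, EvalConsistent E ES ∧ E s σ τ

/-- Extended evaluation `(s,τ) ⇒* τ'`. -/
def ExecSeq (s : Stmt) (τ τ' : Trace) : Prop :=
  ∃ E ES, EvalConsistent E ES ∧ ES s τ τ'

/-- The standard inductive state-based big-step semantics `(s,σ) ⇓ σ'`. -/
inductive BigStep : Stmt → State → State → Prop
  | assign (x : Var) (e : Expr) (σ : State) :
      BigStep (.assign x e) σ (update σ x (e σ))
  | skip (σ : State) : BigStep .skip σ σ
  | seq {s₀ s₁ : Stmt} {σ σ' σ'' : State} :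
      BigStep s₀ σ σ' → BigStep s₁ σ' σ'' → BigStep (.seq s₀ s₁) σ σ''
  | ifTrue {e : Expr} {st sf : Stmt} {σ σ' : State} :
      istrue e σ → BigStep st σ σ' → BigStep (.ifte e st sf) σ σ'
  | ifFalse {e : Expr} {st sf : Stmt} {σ σ' : State} :
      ¬ istrue e σ → BigStep sf σ σ' → BigStep (.ifte e st sf) σ σ'
  | whileTrue {e : Expr} {st : Stmt} {σ σ' σ'' : State} :
      istrue e σ → BigStep st σ σ' → BigStep (.whileDo e st) σ' σ'' →
      BigStep (.whileDo e st) σ σ''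
  | whileFalse {e : Expr} {st : Stmt} {σ : State} :
      ¬ istrue e σ → BigStep (.whileDo e st) σ σ

/-- State predicates. -/
abbrev StatePred := State → Prop
/-- Trace predicates. -/
abbrev TracePred := Trace → Prop

/-- A setoid trace predicate respects bisimilarity. -/
def IsSetoidPred (P : TracePred) : Prop := ∀ τ τ', P τ → Bisim τ τ' → P τ'

/-- The singleton predicate `[U]`. -/
def Sglt (U : StatePred) : TracePred :=
  fun τ => ∃ σ, U σ ∧ τ = Trace.single σ

/-- The doubleton predicate `⟨U⟩`. -/
def Dup (U : StatePred) : TracePred :=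
  fun τ => ∃ σ, U σ ∧ τ = Trace.cons σ (Trace.single σ)

/-- The update predicate `U[x ↦ e]`. -/
def UpdPred (U : StatePred) (x : Var) (e : Expr) : TracePred :=
  fun τ => ∃ σ, U σ ∧ τ = Trace.cons σ (Trace.single (update σ x (e σ)))

/-- `Q follows τ in τ'` (coinductive, as a greatest fixed point). -/
def Follows (Q : TracePred) (τ τ' : Trace) : Prop :=
  ∃ R : Trace → Trace → Prop, R τ τ' ∧
    ∀ a b, R a b →
      (∃ σ, a = Trace.single σ ∧ b.hd = σ ∧ Q b) ∨
      (∃ σ a' b', a = Trace.cons σ a' ∧ b = Trace.cons σ b' ∧ R a' b')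

/-- The chop `P ** Q`. -/
def Chop (P Q : TracePred) : TracePred :=
  fun τ' => ∃ τ, P τ ∧ Follows Q τ τ'

/-- The iteration `P*` (coinductive, as a greatest fixed point). -/
def Iter (P : TracePred) : TracePred := fun τ =>
  ∃ X : TracePred, X τ ∧
    ∀ a, X a → Sglt (fun _ => True) a ∨ ∃ τ₀, P τ₀ ∧ Follows X τ₀ a

/-- `Last P` : states that are the last state of some finite trace satisfying `P`. -/
def Last (P : TracePred) : StatePred := fun σ => ∃ τ, P τ ∧ Converges τ σ

/-- The trace predicate `finite`. -/
def FiniteT : TracePred := fun τ => ∃ σ, Converges τ σ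

/-- Derivability `⊢ {U} s {P}` in the trace-based Hoare logic. -/
inductive THoare : StatePred → Stmt → TracePred → Prop
  | assign (U : StatePred) (x : Var) (e : Expr) :
      THoare U (.assign x e) (UpdPred U x e)
  | skip (U : StatePred) : THoare U .skip (Sglt U)
  | seq {U V : StatePred} {s₀ s₁ : Stmt} {P Q : TracePred} :
      THoare U s₀ (Chop P (Sglt V)) → THoare V s₁ Q →
      THoare U (.seq s₀ s₁) (Chop P Q)
  | ifte {U : StatePred} {e : Expr} {st sf : Stmt} {P : TracePred} :
      THoare (fun σ => istrue e σ ∧ U σ) st P →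
      THoare (fun σ => ¬ istrue e σ ∧ U σ) sf P →
      THoare U (.ifte e st sf) (Chop (Dup U) P)
  | whileDo {U I : StatePred} {e : Expr} {st : Stmt} {P : TracePred} :
      (∀ σ, U σ → I σ) →
      THoare (fun σ => istrue e σ ∧ I σ) st (Chop P (Sglt I)) →
      THoare U (.whileDo e st)
        (Chop (Dup U)
          (Chop (Iter (Chop P (Dup I))) (Sglt (fun σ => ¬ istrue e σ))))
  | conseq {U U' : StatePred} {s : Stmt} {P P' : TracePred} :
      (∀ σ, U σ → U' σ) → THoare U' s P' → (∀ τ, P' τ → P τ) →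
      THoare U s P
  | exist {Z : Type} {U : Z → StatePred} {s : Stmt} {P : Z → TracePred} :
      (∀ z, THoare (U z) s (P z)) →
      THoare (fun σ => ∃ z, U z σ) s (fun τ => ∃ z, P z τ)

/-- Derivability `⊢p {U} s {Z}` in the state-based partial-correctness Hoare logic. -/
inductive PHoare : StatePred → Stmt → StatePred → Prop
  | assign (Z : StatePred) (x : Var) (e : Expr) :
      PHoare (fun σ => Z (update σ x (e σ))) (.assign x e) Z
  | skip (U : StatePred) : PHoare U .skip U
  | seq {U V Z : StatePred} {s₀ s₁ : Stmt} :
      PHoare U s₀ V → PHoare V s₁ Z → PHoare U (.seq s₀ s₁) Z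
  | ifte {U Z : StatePred} {e : Expr} {st sf : Stmt} :
      PHoare (fun σ => istrue e σ ∧ U σ) st Z →
      PHoare (fun σ => ¬ istrue e σ ∧ U σ) sf Z →
      PHoare U (.ifte e st sf) Z
  | whileDo {I : StatePred} {e : Expr} {st : Stmt} :
      PHoare (fun σ => istrue e σ ∧ I σ) st I →
      PHoare I (.whileDo e st) (fun σ => I σ ∧ ¬ istrue e σ)
  | exist {Z : Type} {U V : Z → StatePred} {s : Stmt} :
      (∀ z, PHoare (U z) s (V z)) →
      PHoare (fun σ => ∃ z, U z σ) s (fun σ => ∃ z, V z σ)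
  | conseq {U U' Z Z' : StatePred} {s : Stmt} :
      (∀ σ, U σ → U' σ) → PHoare U' s Z' → (∀ σ, Z' σ → Z σ) →
      PHoare U s Z

/-- Derivability `⊢t {U} s {Z}` in the state-based total-correctness Hoare
logic, with the `while-fun` rule. -/
inductive TotHoare : StatePred → Stmt → StatePred → Prop
  | assign (Z : StatePred) (x : Var) (e : Expr) :
      TotHoare (fun σ => Z (update σ x (e σ))) (.assign x e) Z
  | skip (U : StatePred) : TotHoare U .skip U
  | seq {U V Z : StatePred} {s₀ s₁ : Stmt} :
      TotHoare U s₀ V → TotHoare V s₁ Z → TotHoare U (.seq s₀ s₁) Z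
  | ifte {U Z : StatePred} {e : Expr} {st sf : Stmt} :
      TotHoare (fun σ => istrue e σ ∧ U σ) st Z →
      TotHoare (fun σ => ¬ istrue e σ ∧ U σ) sf Z →
      TotHoare U (.ifte e st sf) Z
  | whileFun {I : StatePred} {e : Expr} {st : Stmt} (t : State → ℕ) (m : ℕ) :
      (∀ n : ℕ, TotHoare (fun σ => istrue e σ ∧ I σ ∧ t σ = n) st
        (fun σ => I σ ∧ t σ < n)) →
      TotHoare (fun σ => I σ ∧ t σ = m) (.whileDo e st)
        (fun σ => I σ ∧ t σ ≤ m ∧ ¬ istrue e σ)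
  | exist {Z : Type} {U V : Z → StatePred} {s : Stmt} :
      (∀ z, TotHoare (U z) s (V z)) →
      TotHoare (fun σ => ∃ z, U z σ) s (fun σ => ∃ z, V z σ)
  | conseq {U U' Z Z' : StatePred} {s : Stmt} :
      (∀ σ, U σ → U' σ) → TotHoare U' s Z' → (∀ σ, Z' σ → Z σ) →
      TotHoare U s Z

/-! ### Auxiliary lemmas for soundness -/

section Aux

lemma single_ne_cons {σ σ' : State} {τ : Trace} : Trace.single σ ≠ Trace.cons σ' τ := by
  intro h
  have h2 := congrArg Prod.snd h
  simp only [Trace.single, Trace.cons] at h2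
  have := congrArg (fun s => Stream'.Seq.get? s 0) h2
  simp at this

lemma cons_inj {σ σ' : State} {τ τ' : Trace} (h : Trace.cons σ τ = Trace.cons σ' τ') :
    σ = σ' ∧ τ = τ' := by
  have h1 := congrArg Prod.fst h
  have h2 := congrArg Prod.snd h
  simp only [Trace.cons] at h1 h2
  have ha := Stream'.Seq.cons_injective2 h2
  exact ⟨h1, Prod.ext ha.1 ha.2⟩

lemma trace_cases (τ : Trace) : (∃ σ, τ = Trace.single σ) ∨ ∃ σ τ', τ = Trace.cons σ τ' := by
  obtain ⟨σ, s⟩ := τ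
  induction s using Stream'.Seq.recOn with
  | nil => exact Or.inl ⟨σ, rfl⟩
  | cons x s => exact Or.inr ⟨σ, (x, s), rfl⟩

@[simp] lemma hd_single (σ : State) : (Trace.single σ).hd = σ := rfl
@[simp] lemma hd_cons (σ : State) (τ : Trace) : (Trace.cons σ τ).hd = σ := rfl

lemma converges_inv {τ : Trace} {ρ : State} (h : Converges τ ρ) :
    τ = Trace.single ρ ∨ ∃ σ' τ', τ = Trace.cons σ' τ' ∧ Converges τ' ρ := by
  cases h with
  | single σ => exact Or.inl rfl
  | cons σ' h' => exact Or.inr ⟨σ', _, rfl, h'⟩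

lemma single_inj {σ σ' : State} (h : Trace.single σ = Trace.single σ') : σ = σ' :=
  congrArg Trace.hd h

lemma converges_single {σ ρ : State} (h : Converges (Trace.single σ) ρ) : ρ = σ := by
  rcases converges_inv h with h1 | ⟨σ', τ', h1, _⟩
  · exact (single_inj h1).symm
  · exact absurd h1 single_ne_cons

lemma converges_cons {σ : State} {τ : Trace} {ρ : State}
    (h : Converges (Trace.cons σ τ) ρ) : Converges τ ρ := by
  rcases converges_inv h with h1 | ⟨σ', τ', h1, h2⟩
  · exact absurd h1.symm single_ne_cons
  · obtain ⟨rfl, rfl⟩ := cons_inj h1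
    exact h2

/-! #### Evaluation destructors -/

lemma evalConsistent_max : EvalConsistent Exec ExecSeq := by
  refine ⟨?_, ?_, ?_, ?_, ?_, ?_⟩
  · rintro x e σ τ ⟨E, ES, hc, h⟩; exact hc.1 x e σ τ h
  · rintro σ τ ⟨E, ES, hc, h⟩; exact hc.2.1 σ τ h
  · rintro s₀ s₁ σ τ' ⟨E, ES, hc, h⟩
    obtain ⟨τ, h1, h2⟩ := hc.2.2.1 s₀ s₁ σ τ' h
    exact ⟨τ, ⟨E, ES, hc, h1⟩, ⟨E, ES, hc, h2⟩⟩
  · rintro e st sf σ τ ⟨E, ES, hc, h⟩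
    rcases hc.2.2.2.1 e st sf σ τ h with ⟨ht, h1⟩ | ⟨ht, h1⟩
    · exact Or.inl ⟨ht, E, ES, hc, h1⟩
    · exact Or.inr ⟨ht, E, ES, hc, h1⟩
  · rintro e st σ τ' ⟨E, ES, hc, h⟩
    rcases hc.2.2.2.2.1 e st σ τ' h with ⟨ht, τ, h1, h2⟩ | hf
    · exact Or.inl ⟨ht, τ, ⟨E, ES, hc, h1⟩, ⟨E, ES, hc, h2⟩⟩
    · exact Or.inr hf
  · rintro s τ τ' ⟨E, ES, hc, h⟩
    rcases hc.2.2.2.2.2 s τ τ' h with ⟨σ, h1, h2⟩ | ⟨σ, τ₀, τ₀', h1, h2, h3⟩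
    · exact Or.inl ⟨σ, h1, E, ES, hc, h2⟩
    · exact Or.inr ⟨σ, τ₀, τ₀', h1, h2, E, ES, hc, h3⟩

lemma exec_assign {x e σ τ} (h : Exec (.assign x e) σ τ) :
    τ = Trace.cons σ (Trace.single (update σ x (e σ))) :=
  evalConsistent_max.1 x e σ τ h

lemma exec_skip {σ τ} (h : Exec .skip σ τ) : τ = Trace.single σ :=
  evalConsistent_max.2.1 σ τ h

lemma exec_seq {s₀ s₁ σ τ'} (h : Exec (.seq s₀ s₁) σ τ') :
    ∃ τ, Exec s₀ σ τ ∧ ExecSeq s₁ τ τ' :=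
  evalConsistent_max.2.2.1 s₀ s₁ σ τ' h

lemma exec_ifte {e st sf σ τ} (h : Exec (.ifte e st sf) σ τ) :
    (istrue e σ ∧ ExecSeq st (Trace.cons σ (Trace.single σ)) τ) ∨
    (¬ istrue e σ ∧ ExecSeq sf (Trace.cons σ (Trace.single σ)) τ) :=
  evalConsistent_max.2.2.2.1 e st sf σ τ h

lemma exec_while {e st σ τ'} (h : Exec (.whileDo e st) σ τ') :
    (istrue e σ ∧ ∃ τ, ExecSeq st (Trace.cons σ (Trace.single σ)) τ ∧
      ExecSeq (.whileDo e st) τ τ') ∨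
    (¬ istrue e σ ∧ τ' = Trace.cons σ (Trace.single σ)) :=
  evalConsistent_max.2.2.2.2.1 e st σ τ' h

lemma execseq_destruct {s τ τ'} (h : ExecSeq s τ τ') :
    (∃ σ, τ = Trace.single σ ∧ Exec s σ τ') ∨
    (∃ σ τ₀ τ₀', τ = Trace.cons σ τ₀ ∧ τ' = Trace.cons σ τ₀' ∧ ExecSeq s τ₀ τ₀') :=
  evalConsistent_max.2.2.2.2.2 s τ τ' h

lemma execseq_single {s σ τ'} (h : ExecSeq s (Trace.single σ) τ') : Exec s σ τ' := by
  rcases execseq_destruct h with ⟨σ', h1, h2⟩ | ⟨σ', τ₀, τ₀', h1, h2, h3⟩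
  · have hσ : σ = σ' := single_inj h1
    subst hσ
    exact h2
  · exact absurd h1 single_ne_cons

lemma execseq_cons {s σ τ₀ τ'} (h : ExecSeq s (Trace.cons σ τ₀) τ') :
    ∃ τ₀', τ' = Trace.cons σ τ₀' ∧ ExecSeq s τ₀ τ₀' := by
  rcases execseq_destruct h with ⟨σ', h1, h2⟩ | ⟨σ', τ₁, τ₁', h1, h2, h3⟩
  · exact absurd h1.symm single_ne_cons
  · obtain ⟨rfl, rfl⟩ := cons_inj h1
    exact ⟨τ₁', h2, h3⟩

lemma execseq_double {s σ τ} (h : ExecSeq s (Trace.cons σ (Trace.single σ)) τ) :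
    ∃ τ₁, τ = Trace.cons σ τ₁ ∧ Exec s σ τ₁ := by
  obtain ⟨τ₁, rfl, h1⟩ := execseq_cons h
  exact ⟨τ₁, rfl, execseq_single h1⟩

lemma exec_hd : ∀ (s : Stmt) {σ τ}, Exec s σ τ → τ.hd = σ := by
  intro s
  induction s with
  | assign x e => intro σ τ h; rw [exec_assign h]; rfl
  | skip => intro σ τ h; rw [exec_skip h]; rfl
  | seq s₀ s₁ ih₀ ih₁ =>
    intro σ τ' h
    obtain ⟨τ, h0, h1⟩ := exec_seq h
    rcases trace_cases τ with ⟨ρ, rfl⟩ | ⟨ρ, τ₀, rfl⟩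
    · have : ρ = σ := ih₀ h0
      subst this
      exact ih₁ (execseq_single h1)
    · have : ρ = σ := ih₀ h0
      subst this
      obtain ⟨τ₀', rfl, _⟩ := execseq_cons h1
      rfl
  | ifte e st sf ih₀ ih₁ =>
    intro σ τ h
    rcases exec_ifte h with ⟨_, h1⟩ | ⟨_, h1⟩ <;>
      · obtain ⟨τ₁, rfl, _⟩ := execseq_cons h1; rfl
  | whileDo e st ih =>
    intro σ τ' h
    rcases exec_while h with ⟨_, τ, h1, h2⟩ | ⟨_, rfl⟩
    · obtain ⟨τ₁, rfl, _⟩ := execseq_cons h1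
      obtain ⟨τ₁', rfl, _⟩ := execseq_cons h2
      rfl
    · rfl

/-! #### Follows lemmas -/

lemma follows_destruct {Q : TracePred} {a b} (h : Follows Q a b) :
    (∃ σ, a = Trace.single σ ∧ b.hd = σ ∧ Q b) ∨
    (∃ σ a' b', a = Trace.cons σ a' ∧ b = Trace.cons σ b' ∧ Follows Q a' b') := by
  obtain ⟨R, hR0, hR⟩ := h
  rcases hR _ _ hR0 with h1 | ⟨σ, a', b', h1, h2, h3⟩
  · exact Or.inl h1
  · exact Or.inr ⟨σ, a', b', h1, h2, R, h3, hR⟩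

lemma follows_coind {Q : TracePred} (R : Trace → Trace → Prop)
    (hR : ∀ a b, R a b →
      (∃ σ, a = Trace.single σ ∧ b.hd = σ ∧ Q b) ∨
      (∃ σ a' b', a = Trace.cons σ a' ∧ b = Trace.cons σ b' ∧ (R a' b' ∨ Follows Q a' b')))
    {a b} (h : R a b) : Follows Q a b := by
  refine ⟨fun x y => R x y ∨ Follows Q x y, Or.inl h, ?_⟩
  rintro x y (hxy | hxy)
  · rcases hR x y hxy with h1 | ⟨σ, a', b', h1, h2, h3⟩
    · exact Or.inl h1
    · exact Or.inr ⟨σ, a', b', h1, h2, h3⟩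
  · rcases follows_destruct hxy with h1 | ⟨σ, a', b', h1, h2, h3⟩
    · exact Or.inl h1
    · exact Or.inr ⟨σ, a', b', h1, h2, Or.inr h3⟩

lemma follows_single {Q : TracePred} {σ b} (h1 : b.hd = σ) (h2 : Q b) :
    Follows Q (Trace.single σ) b :=
  ⟨fun x y => x = Trace.single σ ∧ y = b, ⟨rfl, rfl⟩,
    by rintro x y ⟨rfl, rfl⟩; exact Or.inl ⟨σ, rfl, h1, h2⟩⟩

lemma follows_cons {Q : TracePred} {σ a b} (h : Follows Q a b) :
    Follows Q (Trace.cons σ a) (Trace.cons σ b) := by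
  refine follows_coind (fun x y => x = Trace.cons σ a ∧ y = Trace.cons σ b) ?_ ⟨rfl, rfl⟩
  rintro x y ⟨rfl, rfl⟩
  exact Or.inr ⟨σ, a, b, rfl, rfl, Or.inr h⟩

lemma follows_hd {Q : TracePred} {a b} (h : Follows Q a b) : b.hd = a.hd := by
  rcases follows_destruct h with ⟨σ, rfl, h1, _⟩ | ⟨σ, a', b', rfl, rfl, _⟩
  · simpa using h1
  · rfl

/-- If every convergence point of `b` satisfies `W`, then `[W]` follows `b` in itself. -/
lemma follows_self {W : StatePred} {b} (h : ∀ ρ, Converges b ρ → W ρ) :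
    Follows (Sglt W) b b := by
  refine follows_coind (fun x y => x = y ∧ ∀ ρ, Converges x ρ → W ρ) ?_ ⟨rfl, h⟩
  rintro x y ⟨rfl, hx⟩
  rcases trace_cases x with ⟨σ, rfl⟩ | ⟨σ, x', rfl⟩
  · exact Or.inl ⟨σ, rfl, rfl, σ, hx σ (Converges.single σ), rfl⟩
  · exact Or.inr ⟨σ, x', x', rfl, rfl,
      Or.inl ⟨rfl, fun ρ hρ => hx ρ (hρ.cons σ)⟩⟩

/-- Splitting lemma (a form of associativity of chop). -/
lemma follows_split {Q Q' X : TracePred}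
    (hQ : ∀ c, Q c → ∃ d, Q' d ∧ Follows X d c) :
    ∀ {p a}, Follows Q p a → ∃ t, Follows Q' p t ∧ Follows X t a := by
  have hfin : ∀ {p ρ}, Converges p ρ → ∀ a, Follows Q p a →
      ∃ t, Follows Q' p t ∧ Follows X t a := by
    intro p ρ hc
    induction hc with
    | single σ =>
      intro a ha
      rcases follows_destruct ha with ⟨σ', h1, h2, h3⟩ | ⟨σ', p', a', h1, _, _⟩
      · obtain ⟨d, hd1, hd2⟩ := hQ a h3
        refine ⟨d, ?_, hd2⟩
        rw [h1]
        exact follows_single ((follows_hd hd2).symm.trans h2) hd1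
      · exact absurd h1 single_ne_cons
    | cons σ' hc' ih =>
      intro a ha
      rcases follows_destruct ha with ⟨σ'', h1, _, _⟩ | ⟨σ'', p', a', h1, h2, h3⟩
      · exact absurd h1.symm single_ne_cons
      · obtain ⟨e1, e2⟩ := cons_inj h1
        obtain ⟨t, ht1, ht2⟩ := ih a' (e2 ▸ h3)
        refine ⟨Trace.cons σ' t, follows_cons ht1, ?_⟩
        rw [h2, ← e1]
        exact follows_cons ht2
  intro p a h
  by_cases hp : ∃ ρ, Converges p ρ
  · obtain ⟨ρ, hρ⟩ := hp
    exact hfin hρ a h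
  · -- `p` is infinite: take `t = a`.
    push_neg at hp
    refine ⟨a, ?_, ?_⟩
    · refine follows_coind (fun x y => Follows Q x y ∧ ∀ ρ, ¬ Converges x ρ) ?_ ⟨h, hp⟩
      rintro x y ⟨hxy, hx⟩
      rcases follows_destruct hxy with ⟨σ, rfl, _, _⟩ | ⟨σ, x', y', rfl, rfl, h3⟩
      · exact absurd (Converges.single σ) (hx σ)
      · exact Or.inr ⟨σ, x', y', rfl, rfl,
          Or.inl ⟨h3, fun ρ hρ => hx ρ (hρ.cons σ)⟩⟩
    · refine follows_coind
        (fun x y => x = y ∧ ∃ p₀, (∀ ρ, ¬ Converges p₀ ρ) ∧ Follows Q p₀ x) ?_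
        ⟨rfl, p, hp, h⟩
      rintro x y ⟨rfl, p₀, hp₀, hx⟩
      rcases follows_destruct hx with ⟨σ, rfl, _, _⟩ | ⟨σ, p₁, x', rfl, rfl, h3⟩
      · exact absurd (Converges.single σ) (hp₀ σ)
      · exact Or.inr ⟨σ, x', x', rfl, rfl,
          Or.inl ⟨rfl, p₁, fun ρ hρ => hp₀ ρ (hρ.cons σ), h3⟩⟩

/-- Gluing a `[V]`-terminated `Follows` with an extended execution. -/
lemma follows_execseq {s : Stmt} {V : StatePred} {Q : TracePred}
    (hsound : ∀ σ b, V σ → Exec s σ b → Q b) :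
    ∀ {τ₀ τ τ'}, Follows (Sglt V) τ₀ τ → ExecSeq s τ τ' → Follows Q τ₀ τ' := by
  intro τ₀ τ τ' hf hes
  refine follows_coind (fun x y => ∃ c, Follows (Sglt V) x c ∧ ExecSeq s c y) ?_
    ⟨τ, hf, hes⟩
  rintro x y ⟨c, h1, h2⟩
  rcases follows_destruct h1 with ⟨σ₁, hx1, hhd, σ₂, hV, hc⟩ | ⟨σ₁, x', c', hx1, hc, h3⟩
  · subst hc
    have hσ : σ₂ = σ₁ := hhd
    subst hσ
    have hx := execseq_single h2
    exact Or.inl ⟨σ₂, hx1, exec_hd s hx, hsound σ₂ y hV hx⟩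
  · subst hc
    obtain ⟨y', rfl, h4⟩ := execseq_cons h2
    exact Or.inr ⟨σ₁, x', y', hx1, rfl, Or.inl ⟨c', h3, h4⟩⟩

/-! #### While loops -/

/-- The last state of a (finite) while-loop trace falsifies the guard. -/
lemma while_last {e : Expr} {st : Stmt} :
    ∀ {x ρ}, Converges x ρ →
      (∀ σ, Exec (.whileDo e st) σ x → ¬ istrue e ρ) ∧
      (∀ t, ExecSeq (.whileDo e st) t x → ¬ istrue e ρ) := by
  intro x ρ h
  induction h with
  | single σ₀ =>
    have hA : ∀ σ, Exec (.whileDo e st) σ (Trace.single σ₀) → ¬ istrue e σ₀ := by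
      intro σ hx
      rcases exec_while hx with ⟨_, τ, h1, h2⟩ | ⟨_, habs⟩
      · obtain ⟨τ₁, rfl, _⟩ := execseq_cons h1
        obtain ⟨τ₁', habs, _⟩ := execseq_cons h2
        exact absurd habs single_ne_cons
      · exact absurd habs single_ne_cons
    refine ⟨hA, ?_⟩
    intro t ht
    rcases execseq_destruct ht with ⟨σ, _, h2⟩ | ⟨σ, t₀, x₀, _, habs, _⟩
    · exact hA σ h2
    · exact absurd habs single_ne_cons
  | cons σ' hc ih =>
    rename_i τ σρ
    have hA : ∀ σ, Exec (.whileDo e st) σ (Trace.cons σ' τ) → ¬ istrue e σρ := by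
      intro σ hx
      rcases exec_while hx with ⟨_, τ₂, h1, h2⟩ | ⟨hf, heq⟩
      · obtain ⟨τ₁, rfl, _⟩ := execseq_double h1
        obtain ⟨x₁, heq, h3⟩ := execseq_cons h2
        obtain ⟨rfl, rfl⟩ := cons_inj heq
        exact ih.2 τ₁ h3
      · obtain ⟨rfl, rfl⟩ := cons_inj heq
        have : σρ = σ' := converges_single hc
        subst this
        exact hf
    refine ⟨hA, ?_⟩
    intro t ht
    rcases execseq_destruct ht with ⟨σ, _, h2⟩ | ⟨σ, t₀, x₀, _, heq, h3⟩
    · exact hA σ h2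
    · obtain ⟨rfl, rfl⟩ := cons_inj heq
      exact ih.2 t₀ h3

lemma while_sound {e : Expr} {st : Stmt} {I : StatePred} {P : TracePred}
    (hbody : ∀ σ τ, istrue e σ ∧ I σ → Exec st σ τ → Chop P (Sglt I) τ) :
    ∀ σ τ', I σ → Exec (.whileDo e st) σ τ' →
      ∃ τ₁, τ' = Trace.cons σ τ₁ ∧ τ₁.hd = σ ∧
        Chop (Iter (Chop P (Dup I))) (Sglt (fun ρ => ¬ istrue e ρ)) τ₁ := by
  set WE : TracePred := fun b => ∃ ρ, I ρ ∧ Exec (.whileDo e st) ρ b with hWE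
  set X : TracePred := fun a =>
    (∃ p, P p ∧ Follows WE p a) ∨ (∃ σ, a = Trace.single σ) with hX
  -- unfolding a while-execution from an `I`-state
  have hunfold : ∀ ρ c, I ρ → istrue e ρ → Exec (.whileDo e st) ρ c →
      ∃ c₁, c = Trace.cons ρ c₁ ∧ c₁.hd = ρ ∧ (∃ p, P p ∧ Follows WE p c₁) := by
    intro ρ c hI he hc
    rcases exec_while hc with ⟨_, τ, h1, h2⟩ | ⟨hf, _⟩
    · obtain ⟨τ₁, rfl, hb⟩ := execseq_double h1
      obtain ⟨p, hp, hfol⟩ := hbody ρ τ₁ ⟨he, hI⟩ hb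
      obtain ⟨c₁, rfl, h3⟩ := execseq_cons h2
      have hfol' : Follows WE p c₁ :=
        follows_execseq (fun σ' b hV hb' => ⟨σ', hV, hb'⟩) hfol h3
      have hhd : c₁.hd = ρ := by
        rw [follows_hd hfol', ← follows_hd hfol]
        exact exec_hd st hb
      exact ⟨c₁, rfl, hhd, p, hp, hfol'⟩
    · exact absurd he hf
  have hstep : ∀ c, WE c → ∃ d, Dup I d ∧ Follows X d c := by
    rintro c ⟨ρ, hI, hc⟩
    by_cases he : istrue e ρ
    · obtain ⟨c₁, rfl, hhd, hXc⟩ := hunfold ρ c hI he hc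
      refine ⟨Trace.cons ρ (Trace.single ρ), ⟨ρ, hI, rfl⟩,
        follows_cons (follows_single hhd (Or.inl hXc))⟩
    · rcases exec_while hc with ⟨ht, _⟩ | ⟨_, rfl⟩
      · exact absurd ht he
      · exact ⟨Trace.cons ρ (Trace.single ρ), ⟨ρ, hI, rfl⟩,
          follows_cons (follows_single rfl (Or.inr ⟨ρ, rfl⟩))⟩
  have hiter : ∀ a, X a → Iter (Chop P (Dup I)) a := by
    intro a ha
    refine ⟨X, ha, ?_⟩
    rintro b (⟨p, hp, hf⟩ | ⟨σ, rfl⟩)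
    · obtain ⟨t, ht1, ht2⟩ := follows_split hstep hf
      exact Or.inr ⟨t, ⟨p, hp, ht1⟩, ht2⟩
    · exact Or.inl ⟨σ, trivial, rfl⟩
  intro σ τ' hI hx
  by_cases he : istrue e σ
  · obtain ⟨τ₁, rfl, hhd, hXτ⟩ := hunfold σ τ' hI he hx
    refine ⟨τ₁, rfl, hhd, τ₁, hiter τ₁ (Or.inl hXτ), follows_self ?_⟩
    intro ρ hρ
    exact (while_last (hρ.cons σ)).1 σ hx
  · rcases exec_while hx with ⟨ht, _⟩ | ⟨_, rfl⟩
    · exact absurd ht he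
    · refine ⟨Trace.single σ, rfl, rfl, Trace.single σ, ?_, follows_single rfl ⟨σ, he, rfl⟩⟩
      exact ⟨fun a => a = Trace.single σ, rfl, fun a ha => Or.inl ⟨σ, trivial, ha⟩⟩

end Aux

/-- Soundness of the trace-based Hoare logic. -/
theorem tHoare_sound (s : Stmt) (U : StatePred) (P : TracePred)
    (hP : IsSetoidPred P) (h : THoare U s P) :
    ∀ (σ : State) (τ : Trace), U σ → Exec s σ τ → P τ := by
  clear hP
  induction h with
  | assign U x e =>
    intro σ τ hU hx
    exact ⟨σ, hU, exec_assign hx⟩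
  | skip U =>
    intro σ τ hU hx
    exact ⟨σ, hU, exec_skip hx⟩
  | seq h₀ h₁ ih₀ ih₁ =>
    intro σ τ' hU hx
    obtain ⟨τ, hx0, hx1⟩ := exec_seq hx
    obtain ⟨τ₀, hp, hf⟩ := ih₀ σ τ hU hx0
    exact ⟨τ₀, hp, follows_execseq (fun σ' b hV hb => ih₁ σ' b hV hb) hf hx1⟩
  | ifte ht hf iht ihf =>
    intro σ τ hU hx
    rcases exec_ifte hx with ⟨he, hes⟩ | ⟨he, hes⟩ <;>
    · obtain ⟨τ₁, rfl, hb⟩ := execseq_double hes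
      refine ⟨Trace.cons σ (Trace.single σ), ⟨σ, hU, rfl⟩,
        follows_cons (follows_single (exec_hd _ hb) ?_)⟩
      first
        | exact iht σ τ₁ ⟨he, hU⟩ hb
        | exact ihf σ τ₁ ⟨he, hU⟩ hb
  | whileDo hUI hb ihb =>
    intro σ τ' hU hx
    obtain ⟨τ₁, rfl, hhd, hch⟩ :=
      while_sound (fun σ' τ h hx' => ihb σ' τ h hx') σ τ' (hUI σ hU) hx
    exact ⟨Trace.cons σ (Trace.single σ), ⟨σ, hU, rfl⟩,
      follows_cons (follows_single hhd hch)⟩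
  | conseq hUU' h' hPP' ih =>
    intro σ τ hU hx
    exact hPP' τ (ih σ τ (hUU' σ hU) hx)
  | exist h' ih =>
    rintro σ τ ⟨z, hU⟩ hx
    exact ⟨z, ih z σ τ hU hx⟩

end WhileTrace
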